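/- arXiv:2104.03155 — 2 statements merged into one kernel-verified Lean document; each statement's English description precedes it below -/
import Mathlib

section
/- For every q ∈ ℝ³ with ‖q‖ < 2π, log(exp(q)) = q, where exp(q) = (cos(‖q‖/2), sin(‖q‖/2)·q/‖q‖) for q ≠ 0 and exp(0) = (1,0,0,0), and log(Q) = 2·arccos(w)·v/‖v‖ for a unit quaternion Q = (w, v) with |w| ≠ 1, log(Q) = 0 otherwise. -/
open scoped Classical

/-- The quaternion exponential `exp : ℝ³ → ℝ × ℝ³`, with quaternions written as
pairs `(w, v)` of scalar and vector part:
`exp(q) = (cos(‖q‖/2), sin(‖q‖/2) · q/‖q‖)` for `q ≠ 0`, `exp(0) = (1, 0)`. -/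
noncomputable def quatExp (q : EuclideanSpace ℝ (Fin 3)) :
    ℝ × EuclideanSpace ℝ (Fin 3) :=
  if q = 0 then (1, 0)
  else (Real.cos (‖q‖ / 2), (Real.sin (‖q‖ / 2) / ‖q‖) • q)

/-- The quaternion logarithm of a (unit) quaternion `Q = (w, v)`:
`log(Q) = 2 · arccos(w) · v/‖v‖` if `|w| ≠ 1`, and `log(Q) = 0` otherwise. -/
noncomputable def quatLog (Q : ℝ × EuclideanSpace ℝ (Fin 3)) :
    EuclideanSpace ℝ (Fin 3) :=
  if |Q.1| = 1 then 0
  else (2 * Real.arccos Q.1 / ‖Q.2‖) • Q.2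

/-- For every `q ∈ ℝ³` with `‖q‖ < 2π`, `log(exp(q)) = q`. -/
theorem quatLog_quatExp (q : EuclideanSpace ℝ (Fin 3))
    (hq : ‖q‖ < 2 * Real.pi) :
    quatLog (quatExp q) = q := by
  by_cases h : q = 0
  · simp [quatExp, quatLog, h]
  · have hn : 0 < ‖q‖ := norm_pos_iff.mpr h
    set θ := ‖q‖ / 2 with hθ
    have hθ0 : 0 < θ := by positivity
    have hθπ : θ < Real.pi := by rw [hθ]; linarith
    have hsin : 0 < Real.sin θ := Real.sin_pos_of_pos_of_lt_pi hθ0 hθπ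
    have hcos1 : Real.cos θ < 1 := by
      have := Real.cos_lt_cos_of_nonneg_of_le_pi le_rfl hθπ.le hθ0
      simpa using this
    have hcos2 : -1 < Real.cos θ := by
      have := Real.cos_lt_cos_of_nonneg_of_le_pi hθ0.le le_rfl hθπ
      simpa using this
    have hcos : ¬ |Real.cos θ| = 1 := by
      exact ne_of_lt (abs_lt.mpr ⟨hcos2, hcos1⟩)
    rw [quatExp, if_neg h, quatLog]
    simp only [if_neg hcos]
    have harc : Real.arccos (Real.cos θ) = θ :=
      Real.arccos_cos hθ0.le hθπ.le
    have hnv : ‖(Real.sin θ / ‖q‖) • q‖ = Real.sin θ := by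
      rw [norm_smul, Real.norm_eq_abs, abs_of_pos (div_pos hsin hn)]
      field_simp
    rw [harc, hnv, smul_smul]
    have : 2 * θ / Real.sin θ * (Real.sin θ / ‖q‖) = 1 := by
      field_simp [hθ]
      linarith
    rw [this, one_smul]
    exact if_neg hcos
end

section
/- Let k ∈ ℝ³ be a unit vector (‖k‖ = 1) and let θ ∈ (0, π). Define the 3×4 real matrix J_Q = 2 · [ ((θ cos θ − sin θ)/sin² θ) · k ∣ (θ/sin θ) · I₃ ] (first column the given multiple of k, remaining 3×3 block the given multiple of the identity) and the 4×3 real matrix J_q = (1/2) · [ −sin θ · kᵀ ; (sin θ/θ)(I₃ − k kᵀ) + cos θ · k kᵀ ] (first row −sin θ · kᵀ, remaining 3×3 block as given). Then J_Q · J_q = I₃. -/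
set_option maxHeartbeats 1000000


open Matrix Real

/-- For a unit vector `k ∈ ℝ³` and `θ ∈ (0, π)`, the Jacobians
`J_Q = 2 [ ((θ cos θ − sin θ)/sin² θ) k ∣ (θ/sin θ) I₃ ]` (3×4) and
`J_q = (1/2) [ −sin θ kᵀ ; (sin θ/θ)(I₃ − k kᵀ) + cos θ k kᵀ ]` (4×3)
satisfy `J_Q · J_q = I₃`. -/
theorem JQ_mul_Jq_eq_one (k : Fin 3 → ℝ)
    (hk : k 0 ^ 2 + k 1 ^ 2 + k 2 ^ 2 = 1)
    (θ : ℝ) (hθ : θ ∈ Set.Ioo 0 Real.pi)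
    (c s a b : ℝ)
    (hc : c = (θ * Real.cos θ - Real.sin θ) / (Real.sin θ) ^ 2)
    (hs : s = θ / Real.sin θ)
    (ha : a = Real.sin θ / θ)
    (hb : b = Real.cos θ)
    (JQ : Matrix (Fin 3) (Fin 4) ℝ)
    (hJQ : JQ = (2 : ℝ) •
      !![c * k 0, s, 0, 0;
         c * k 1, 0, s, 0;
         c * k 2, 0, 0, s])
    (Jq : Matrix (Fin 4) (Fin 3) ℝ)
    (hJq : Jq = (1 / 2 : ℝ) •
      !![-Real.sin θ * k 0, -Real.sin θ * k 1, -Real.sin θ * k 2;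
         a * (1 - k 0 * k 0) + b * (k 0 * k 0),
           a * (0 - k 0 * k 1) + b * (k 0 * k 1),
           a * (0 - k 0 * k 2) + b * (k 0 * k 2);
         a * (0 - k 1 * k 0) + b * (k 1 * k 0),
           a * (1 - k 1 * k 1) + b * (k 1 * k 1),
           a * (0 - k 1 * k 2) + b * (k 1 * k 2);
         a * (0 - k 2 * k 0) + b * (k 2 * k 0),
           a * (0 - k 2 * k 1) + b * (k 2 * k 1),
           a * (1 - k 2 * k 2) + b * (k 2 * k 2)]) :
    JQ * Jq = (1 : Matrix (Fin 3) (Fin 3) ℝ) := by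
  have hθ0 : θ ≠ 0 := ne_of_gt hθ.1
  have hsin : Real.sin θ ≠ 0 := ne_of_gt (Real.sin_pos_of_pos_of_lt_pi hθ.1 hθ.2)
  subst hc hs ha hb hJQ hJq
  set C := Real.cos θ
  set S := Real.sin θ
  ext i j
  fin_cases i <;> fin_cases j <;>
    · simp only [Matrix.mul_apply, Fin.sum_univ_four, Matrix.smul_apply,
        Matrix.cons_val', Matrix.cons_val_zero, Matrix.cons_val_one,
        Matrix.head_cons, Matrix.empty_val', Matrix.cons_val_fin_one,
        Matrix.head_fin_const, Matrix.one_apply, Fin.mk.injEq,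
        Matrix.cons_val_two, Matrix.cons_val_three, Matrix.tail_cons,
        smul_eq_mul, Matrix.of_apply]
      norm_num
      field_simp
      nlinarith [hk, sq_nonneg S]
end
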